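/- Let X be a finite set of points in Euclidean space ℝ^d and let Z be a nonempty finite subset of ℝ^d with φ_X(Z) > 0. Then there exists a point x ∈ X with d(x, conv(Z)) > 0, and for any such point, φ_X(Z ∪ {x}) ≤ φ_X(Z) − d(x, conv(Z))² < φ_X(Z); hence a step of the AA++ initialization decreases the objective with probability one. -/
import Mathlib


/-- If φ_X(Z) > 0 then some x ∈ X has d(x, conv(Z)) > 0, and for any such
point, φ_X(Z ∪ {x}) ≤ φ_X(Z) − d(x, conv(Z))² < φ_X(Z); hence an AA++ step decreases the
objective with probability one. -/
theorem aapp_step_decreases_with_probability_one {d : ℕ}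
    (X Z : Finset (EuclideanSpace ℝ (Fin d))) (hZ : Z.Nonempty)
    (hφ : 0 < ∑ y ∈ X, (Metric.infDist y
        (convexHull ℝ (Z : Set (EuclideanSpace ℝ (Fin d))))) ^ 2) :
    (∃ x ∈ X, 0 < Metric.infDist x (convexHull ℝ (Z : Set (EuclideanSpace ℝ (Fin d)))))
    ∧ ∀ x ∈ X,
        0 < Metric.infDist x (convexHull ℝ (Z : Set (EuclideanSpace ℝ (Fin d)))) →
        (∑ y ∈ X, (Metric.infDist y
              (convexHull ℝ (insert x (Z : Set (EuclideanSpace ℝ (Fin d)))))) ^ 2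
            ≤ (∑ y ∈ X, (Metric.infDist y
                (convexHull ℝ (Z : Set (EuclideanSpace ℝ (Fin d))))) ^ 2)
              - (Metric.infDist x (convexHull ℝ (Z : Set (EuclideanSpace ℝ (Fin d))))) ^ 2)
        ∧ ∑ y ∈ X, (Metric.infDist y
              (convexHull ℝ (insert x (Z : Set (EuclideanSpace ℝ (Fin d)))))) ^ 2
            < ∑ y ∈ X, (Metric.infDist y
                (convexHull ℝ (Z : Set (EuclideanSpace ℝ (Fin d))))) ^ 2 := by
  classical
  set S : Set (EuclideanSpace ℝ (Fin d)) := (Z : Set (EuclideanSpace ℝ (Fin d)))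
  have hSne : (convexHull ℝ S).Nonempty := hZ.to_set.mono (subset_convexHull ℝ S)
  have hd0 : ∀ y, 0 ≤ Metric.infDist y (convexHull ℝ S) := fun y => Metric.infDist_nonneg
  constructor
  · by_contra h
    push_neg at h
    have : ∑ y ∈ X, (Metric.infDist y (convexHull ℝ S)) ^ 2 = 0 := by
      apply Finset.sum_eq_zero
      intro y hy
      have := le_antisymm (h y hy) (hd0 y)
      simp [this]
    linarith
  · intro x hx hpos
    have hsub : convexHull ℝ S ⊆ convexHull ℝ (insert x S) :=
      convexHull_mono (Set.subset_insert _ _)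
    have hle : ∀ y, Metric.infDist y (convexHull ℝ (insert x S))
        ≤ Metric.infDist y (convexHull ℝ S) := fun y =>
      Metric.infDist_le_infDist_of_subset hsub hSne
    have hle2 : ∀ y, (Metric.infDist y (convexHull ℝ (insert x S))) ^ 2
        ≤ (Metric.infDist y (convexHull ℝ S)) ^ 2 := fun y =>
      pow_le_pow_left₀ Metric.infDist_nonneg (hle y) 2
    have hx0 : Metric.infDist x (convexHull ℝ (insert x S)) = 0 :=
      Metric.infDist_zero_of_mem (subset_convexHull ℝ _ (Set.mem_insert _ _))
    have key : ∑ y ∈ X, (Metric.infDist y (convexHull ℝ (insert x S))) ^ 2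
        ≤ (∑ y ∈ X, (Metric.infDist y (convexHull ℝ S)) ^ 2)
          - (Metric.infDist x (convexHull ℝ S)) ^ 2 := by
      rw [← Finset.add_sum_erase _ _ hx, ← Finset.add_sum_erase _ (fun y => (Metric.infDist y (convexHull ℝ S)) ^ 2) hx, hx0]
      have : ∑ y ∈ X.erase x, (Metric.infDist y (convexHull ℝ (insert x S))) ^ 2
          ≤ ∑ y ∈ X.erase x, (Metric.infDist y (convexHull ℝ S)) ^ 2 :=
        Finset.sum_le_sum fun y _ => hle2 y
      nlinarith
    exact ⟨key, lt_of_le_of_lt key (by nlinarith)⟩
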